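/- Let (Ω,F,P) be a probability space and suppose random variables Q_n(m) for m ∈ {1,…,M} satisfy: for every m1 in a subset M^c and a fixed m* ∉ M^c, (1/n)(Q_n(m1) − Q_n(m*)) converges in probability to a constant c_{m1} > 0. Define m̂_n to be any minimizer of Q_n(m) over m ∈ {1,…,M}. Then P(m̂_n ∈ M^c) → 0 as n → ∞. -/

import Mathlib

open MeasureTheory Filter

/-- if for every misspecified model `m1 ∈ Mc` the normalized criterion
difference `(1/n)(Q_n(m1) - Q_n(m*))` converges in probability to a positive constant,
then the probability that the criterion minimizer `m̂_n` lies in `Mc` tends to `0`. -/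
theorem stmt10 (M : ℕ) (Ω : Type) (m0 : MeasurableSpace Ω) (μ : Measure Ω)
    [IsProbabilityMeasure μ]
    (Q : ℕ → Fin M → Ω → ℝ) (Mc : Set (Fin M)) (mstar : Fin M) (hmstar : mstar ∉ Mc)
    (c : Fin M → ℝ) (hc : ∀ m1 ∈ Mc, 0 < c m1)
    (hconv : ∀ m1 ∈ Mc,
      TendstoInMeasure μ
        (fun (n : ℕ) ω => (1 / (n : ℝ)) * (Q n m1 ω - Q n mstar ω)) atTop
        (fun _ => c m1))
    (mhat : ℕ → Ω → Fin M)
    (hmin : ∀ n ω, ∀ m : Fin M, Q n (mhat n ω) ω ≤ Q n m ω) :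
    Tendsto (fun n => μ {ω | mhat n ω ∈ Mc}) atTop (nhds 0) := by
  classical
  set s : Finset (Fin M) := Finset.univ.filter (· ∈ Mc) with hs
  have hsub : ∀ n, {ω | mhat n ω ∈ Mc} ⊆
      ⋃ m1 ∈ s, {ω | c m1 ≤ dist ((1 / (n : ℝ)) * (Q n m1 ω - Q n mstar ω)) (c m1)} := by
    intro n ω hω
    have hmem : mhat n ω ∈ s := by simpa [hs] using hω
    refine Set.mem_biUnion hmem ?_
    set m1 := mhat n ω
    have hle : Q n m1 ω ≤ Q n mstar ω := hmin n ω mstar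
    have hX : (1 / (n : ℝ)) * (Q n m1 ω - Q n mstar ω) ≤ 0 := by
      apply mul_nonpos_of_nonneg_of_nonpos
      · positivity
      · linarith
    have hcpos : 0 < c m1 := hc m1 hω
    simp only [Set.mem_setOf_eq, Real.dist_eq]
    rw [abs_of_nonpos (by linarith)]
    linarith
  have hle : ∀ n, μ {ω | mhat n ω ∈ Mc} ≤
      ∑ m1 ∈ s, μ {ω | c m1 ≤ dist ((1 / (n : ℝ)) * (Q n m1 ω - Q n mstar ω)) (c m1)} :=
    fun n => (measure_mono (hsub n)).trans (measure_biUnion_finset_le _ _)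
  have hsum : Tendsto (fun k : ℕ => ∑ m1 ∈ s,
      μ {ω | c m1 ≤ dist ((1 / (k : ℝ)) * (Q k m1 ω - Q k mstar ω)) (c m1)})
      atTop (nhds 0) := by
    have := tendsto_finset_sum s (fun m1 hm1 => by
      have hm1' : m1 ∈ Mc := (Finset.mem_filter.mp hm1).2
      exact tendstoInMeasure_iff_dist.mp (hconv m1 hm1') (c m1) (hc m1 hm1'))
    simpa using this
  exact tendsto_of_tendsto_of_tendsto_of_le_of_le tendsto_const_nhds hsum
    (fun n => zero_le) hle
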